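/- arXiv:2406.19242 — 4 statements merged into one kernel-verified Lean document; each statement's English description precedes it below -/
import Mathlib

section
/- Let U, V₁, …, Vₙ be independent uniform variables on (0,1), and for γ ∈ (0,1) let Uᵢ^γ = γVᵢ1_{U≤γ} + U1_{U>γ}. If 0 < γ₁ ≤ γ₂ < 1, then U^{γ₂} is smaller than U^{γ₁} in the lower orthant order: P(U^{γ₂} ≤ a) ≤ P(U^{γ₁} ≤ a) for all a ∈ ℝⁿ. -/
open MeasureTheory

lemma unif_Iic (t : ℝ) :
    (volume.restrict (Set.Ioo (0:ℝ) 1)) (Set.Iic t) = ENNReal.ofReal (min 1 (max 0 t)) := by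
  rw [Measure.restrict_apply measurableSet_Iic]
  rcases le_or_gt t 0 with h | h
  · have he : Set.Iic t ∩ Set.Ioo (0:ℝ) 1 = ∅ := by
      ext x; simp only [Set.mem_inter_iff, Set.mem_Iic, Set.mem_Ioo, Set.mem_empty_iff_false,
        iff_false, not_and]
      intro hx h0; linarith
    rw [he, max_eq_left h, min_eq_right (by norm_num : (0:ℝ) ≤ 1)]
    simp
  · rcases lt_or_ge t 1 with h1 | h1
    · have he : Set.Iic t ∩ Set.Ioo (0:ℝ) 1 = Set.Ioc 0 t := by
        ext x; simp only [Set.mem_inter_iff, Set.mem_Iic, Set.mem_Ioo, Set.mem_Ioc]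
        constructor
        · rintro ⟨hx, h0, _⟩; exact ⟨h0, hx⟩
        · rintro ⟨h0, hx⟩; exact ⟨hx, h0, lt_of_le_of_lt hx h1⟩
      rw [he, Real.volume_Ioc, max_eq_right h.le, min_eq_right h1.le, sub_zero]
    · have he : Set.Iic t ∩ Set.Ioo (0:ℝ) 1 = Set.Ioo 0 1 := by
        apply Set.inter_eq_right.mpr
        intro x hx; exact le_trans hx.2.le h1
      rw [he, Real.volume_Ioo, max_eq_right h.le, min_eq_left h1, sub_zero]

lemma unif_Ioc {γ : ℝ} (hγ : 0 < γ) (m : ℝ) :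
    (volume.restrict (Set.Ioo (0:ℝ) 1)) (Set.Ioc γ m) = ENNReal.ofReal (max 0 (min m 1 - γ)) := by
  have hmax : ENNReal.ofReal (max 0 (min m 1 - γ)) = ENNReal.ofReal (min m 1 - γ) := by
    rcases le_or_gt (min m 1 - γ) 0 with h | h
    · rw [max_eq_left h, ENNReal.ofReal_zero, ENNReal.ofReal_eq_zero.mpr h]
    · rw [max_eq_right h.le]
  rw [Measure.restrict_apply measurableSet_Ioc, hmax]
  rcases le_or_gt m γ with h | h
  · have he : Set.Ioc γ m ∩ Set.Ioo (0:ℝ) 1 = ∅ := by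
      rw [Set.Ioc_eq_empty (by exact not_lt.mpr h), Set.empty_inter]
    rw [he, measure_empty, Eq.comm, ENNReal.ofReal_eq_zero]
    have : min m 1 ≤ γ := le_trans (min_le_left _ _) h
    linarith
  · rcases lt_or_ge m 1 with h1 | h1
    · have he : Set.Ioc γ m ∩ Set.Ioo (0:ℝ) 1 = Set.Ioc γ m := by
        apply Set.inter_eq_left.mpr
        intro x hx; exact ⟨lt_trans hγ hx.1, lt_of_le_of_lt hx.2 h1⟩
      rw [he, Real.volume_Ioc, min_eq_left h1.le]
    · have he : Set.Ioc γ m ∩ Set.Ioo (0:ℝ) 1 = Set.Ioo γ 1 := by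
        ext x
        simp only [Set.mem_inter_iff, Set.mem_Ioc, Set.mem_Ioo]
        constructor
        · rintro ⟨⟨ha, _⟩, _, hb⟩; exact ⟨ha, hb⟩
        · rintro ⟨ha, hb⟩; exact ⟨⟨ha, le_trans hb.le h1⟩, lt_trans hγ ha, hb⟩
      rw [he, Real.volume_Ioo, min_eq_right h1]

lemma prob_formula {Ω : Type*} [MeasurableSpace Ω] (P : Measure Ω) [IsProbabilityMeasure P]
    (k : ℕ) (U : Ω → ℝ) (V : Fin (k+1) → Ω → ℝ)
    (hU : Measurable U) (hV : ∀ i, Measurable (V i))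
    (hUunif : P.map U = volume.restrict (Set.Ioo (0 : ℝ) 1))
    (hVunif : ∀ i, P.map (V i) = volume.restrict (Set.Ioo (0 : ℝ) 1))
    (hindep : ProbabilityTheory.iIndepFun
      (Fin.cons U V : Fin (k + 1 + 1) → Ω → ℝ) P)
    (γ : ℝ) (hγ0 : 0 < γ) (hγ1 : γ < 1) (a : Fin (k+1) → ℝ) :
    P {ω | ∀ i, (if U ω ≤ γ then γ * V i ω else U ω) ≤ a i}
      = ENNReal.ofReal (γ * ∏ i, min 1 (max 0 (a i / γ)))
        + ENNReal.ofReal (max 0 (min (Finset.univ.inf' Finset.univ_nonempty a) 1 - γ)) := by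
  set m := Finset.univ.inf' Finset.univ_nonempty a with hm
  set sets : ∀ _ : Fin (k+1+1), Set ℝ := Fin.cons (Set.Iic γ) (fun i => Set.Iic (a i / γ))
    with hsets
  set A : Set Ω := ⋂ i ∈ Finset.univ, ((Fin.cons U V : Fin (k+1+1) → Ω → ℝ) i) ⁻¹' sets i with hA
  set B : Set Ω := U ⁻¹' Set.Ioc γ m with hB
  have hAmem : ∀ ω, ω ∈ A ↔ (U ω ≤ γ ∧ ∀ i, V i ω ≤ a i / γ) := by
    intro ω
    simp only [hA, Finset.mem_univ, Set.iInter_true, Set.mem_iInter, Set.mem_preimage]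
    constructor
    · intro h
      exact ⟨by simpa [hsets] using h 0, fun i => by simpa [hsets] using h i.succ⟩
    · rintro ⟨h0, hs⟩ i
      refine Fin.cases ?_ ?_ i
      · simpa [hsets] using h0
      · intro j; simpa [hsets] using hs j
  have hsplit : {ω | ∀ i, (if U ω ≤ γ then γ * V i ω else U ω) ≤ a i} = A ∪ B := by
    ext ω
    simp only [Set.mem_setOf_eq, Set.mem_union, hAmem, hB, Set.mem_preimage, Set.mem_Ioc]
    by_cases h : U ω ≤ γ
    · simp only [h, if_true, true_and]
      constructor
      · intro hi
        exact Or.inl fun i => (le_div_iff₀ hγ0).mpr (by linarith [hi i, mul_comm γ (V i ω)] )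
      · rintro (hi | hi)
        · intro i; have := (le_div_iff₀ hγ0).mp (hi i); linarith [mul_comm (V i ω) γ]
        · exact absurd hi.1 (not_lt.mpr h)
    · push_neg at h
      simp only [if_neg (not_le.mpr h)]
      constructor
      · intro hi
        exact Or.inr ⟨h, Finset.le_inf' _ _ fun i _ => hi i⟩
      · rintro (⟨hle, _⟩ | ⟨_, hle⟩)
        · exact absurd hle (not_le.mpr h)
        · intro i; exact le_trans hle (Finset.inf'_le _ (Finset.mem_univ i))
  have hAB : Disjoint A B := by
    rw [Set.disjoint_left]
    intro ω hωA hωB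
    exact absurd ((hAmem ω).mp hωA).1 (not_le.mpr hωB.1)
  have hBmeas : MeasurableSet B := hU measurableSet_Ioc
  rw [hsplit, measure_union hAB hBmeas]
  have hsets_meas : ∀ i, i ∈ Finset.univ → MeasurableSet (sets i) := by
    intro i _
    refine Fin.cases ?_ ?_ i
    · simp only [hsets, Fin.cons_zero]; exact measurableSet_Iic
    · intro j; simp only [hsets, Fin.cons_succ]; exact measurableSet_Iic
  have hPA : P A = ENNReal.ofReal (γ * ∏ i, min 1 (max 0 (a i / γ))) := by
    rw [hA, hindep.measure_inter_preimage_eq_mul Finset.univ hsets_meas]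
    rw [Fin.prod_univ_succ]
    simp only [hsets, Fin.cons_zero, Fin.cons_succ]
    have hU0 : P (U ⁻¹' Set.Iic γ) = ENNReal.ofReal γ := by
      rw [← Measure.map_apply hU measurableSet_Iic, hUunif, unif_Iic,
        max_eq_right hγ0.le, min_eq_right hγ1.le]
    have hVi : ∀ i : Fin (k+1), P (V i ⁻¹' Set.Iic (a i / γ))
        = ENNReal.ofReal (min 1 (max 0 (a i / γ))) := by
      intro i
      rw [← Measure.map_apply (hV i) measurableSet_Iic, hVunif i, unif_Iic]
    rw [hU0]
    rw [Finset.prod_congr rfl fun i _ => hVi i]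
    rw [← ENNReal.ofReal_prod_of_nonneg fun i _ => le_min zero_le_one (le_max_left _ _),
      ← ENNReal.ofReal_mul hγ0.le]
  have hPB : P B = ENNReal.ofReal (max 0 (min m 1 - γ)) := by
    rw [hB, ← Measure.map_apply hU measurableSet_Ioc, hUunif, unif_Ioc hγ0]
  rw [hPA, hPB]

lemma factor_nonneg (x : ℝ) : 0 ≤ min 1 (max 0 x) := le_min zero_le_one (le_max_left _ _)

lemma prod_reduce (k : ℕ) (a : Fin (k+1) → ℝ) (j : Fin (k+1)) {γ m : ℝ} (hγ : 0 < γ)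
    (hj : a j = m) (hm0 : 0 < m) (hmγ : m ≤ γ) :
    γ * ∏ i, min 1 (max 0 (a i / γ)) =
      m * ∏ i ∈ Finset.univ.erase j, min 1 (max 0 (a i / γ)) := by
  rw [← Finset.mul_prod_erase Finset.univ _ (Finset.mem_univ j), hj]
  have h1 : min 1 (max 0 (m / γ)) = m / γ := by
    rw [max_eq_right (by positivity), min_eq_right (by
      rw [div_le_one hγ]; exact hmγ)]
  rw [h1, ← mul_assoc, mul_div_cancel₀ _ (ne_of_gt hγ)]

lemma key_ineq (k : ℕ) (a : Fin (k+1) → ℝ) (γ₁ γ₂ : ℝ)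
    (h1 : 0 < γ₁) (h12 : γ₁ ≤ γ₂) (h2 : γ₂ < 1) :
    γ₂ * ∏ i, min 1 (max 0 (a i / γ₂))
      + max 0 (min (Finset.univ.inf' Finset.univ_nonempty a) 1 - γ₂)
    ≤ γ₁ * ∏ i, min 1 (max 0 (a i / γ₁))
      + max 0 (min (Finset.univ.inf' Finset.univ_nonempty a) 1 - γ₁) := by
  set m := Finset.univ.inf' Finset.univ_nonempty a with hmdef
  obtain ⟨j, -, hj⟩ := Finset.exists_mem_eq_inf' (Finset.univ_nonempty) a
  have hj' : a j = m := hj.symm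
  have hm_le : ∀ i, m ≤ a i := fun i => Finset.inf'_le _ (Finset.mem_univ i)
  have h20 : 0 < γ₂ := lt_of_lt_of_le h1 h12
  have h11 : γ₁ < 1 := lt_of_le_of_lt h12 h2
  rcases le_or_gt m 0 with hm | hm
  · have hz : ∀ γ : ℝ, 0 < γ → (∏ i, min 1 (max 0 (a i / γ))) = 0 := by
      intro γ hγ
      refine Finset.prod_eq_zero (Finset.mem_univ j) ?_
      rw [hj', max_eq_left (div_nonpos_of_nonpos_of_nonneg hm hγ.le),
        min_eq_right (le_refl 0 |>.trans zero_le_one)]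
    have hmax : ∀ γ : ℝ, 0 < γ → max 0 (min m 1 - γ) = 0 := by
      intro γ hγ
      rw [max_eq_left]
      have := min_le_left m 1; linarith
    rw [hz γ₁ h1, hz γ₂ h20, hmax γ₁ h1, hmax γ₂ h20]
    simp
  · rcases le_or_gt (min m 1) γ₁ with hc | hc
    · have hmle : m ≤ γ₁ := by
        rcases min_cases m 1 with ⟨he, _⟩ | ⟨he, hle⟩
        · rwa [he] at hc
        · rw [he] at hc; linarith
      have hmax : ∀ γ : ℝ, γ₁ ≤ γ → max 0 (min m 1 - γ) = 0 := by
        intro γ hγ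
        rw [max_eq_left]
        have := min_le_left m 1; linarith
      rw [hmax γ₁ le_rfl, hmax γ₂ h12, add_zero, add_zero,
        prod_reduce k a j h1 hj' hm hmle, prod_reduce k a j h20 hj' hm (hmle.trans h12)]
      refine mul_le_mul_of_nonneg_left ?_ hm.le
      refine Finset.prod_le_prod (fun i _ => factor_nonneg _) (fun i _ => ?_)
      have hai : 0 < a i := lt_of_lt_of_le hm (hm_le i)
      exact min_le_min le_rfl (max_le_max le_rfl (by gcongr))
    · have hγ1m : γ₁ < m := lt_of_lt_of_le hc (min_le_left _ _)
      have hRHS : γ₁ * ∏ i, min 1 (max 0 (a i / γ₁)) + max 0 (min m 1 - γ₁) = min m 1 := by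
        have hp : (∏ i, min 1 (max 0 (a i / γ₁))) = 1 := by
          refine Finset.prod_eq_one fun i _ => ?_
          rw [min_eq_left]
          refine le_max_of_le_right ?_
          rw [le_div_iff₀ h1, one_mul]
          exact le_trans hγ1m.le (hm_le i)
        rw [hp, mul_one, max_eq_right (by linarith)]
        ring
      rw [hRHS]
      rcases lt_or_ge γ₂ (min m 1) with hc2 | hc2
      · have hLHS : γ₂ * ∏ i, min 1 (max 0 (a i / γ₂)) + max 0 (min m 1 - γ₂) = min m 1 := by
          have hγ2m : γ₂ < m := lt_of_lt_of_le hc2 (min_le_left _ _)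
          have hp : (∏ i, min 1 (max 0 (a i / γ₂))) = 1 := by
            refine Finset.prod_eq_one fun i _ => ?_
            rw [min_eq_left]
            refine le_max_of_le_right ?_
            rw [le_div_iff₀ h20, one_mul]
            exact le_trans hγ2m.le (hm_le i)
          rw [hp, mul_one, max_eq_right (by linarith)]
          ring
        rw [hLHS]
      · have hmle2 : m ≤ γ₂ := by
          rcases min_cases m 1 with ⟨he, _⟩ | ⟨he, hle⟩
          · rwa [he] at hc2
          · rw [he] at hc2; linarith
        rw [max_eq_left (by have := min_le_left m 1; linarith), add_zero,
          prod_reduce k a j h20 hj' hm hmle2]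
        have hple : (∏ i ∈ Finset.univ.erase j, min 1 (max 0 (a i / γ₂))) ≤ 1 :=
          Finset.prod_le_one (fun i _ => factor_nonneg _) (fun i _ => min_le_left _ _)
        calc m * ∏ i ∈ Finset.univ.erase j, min 1 (max 0 (a i / γ₂))
            ≤ m * 1 := mul_le_mul_of_nonneg_left hple hm.le
          _ = m := mul_one m
          _ ≤ min m 1 := le_min le_rfl (by linarith)

/-- If `0 < γ₁ ≤ γ₂ < 1`, then `U^{γ₂}` is smaller than `U^{γ₁}` in the lower orthant order. -/
theorem U_gamma_lowerOrthant {Ω : Type*} [MeasurableSpace Ω] (P : Measure Ω)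
    [IsProbabilityMeasure P]
    (n : ℕ) (U : Ω → ℝ) (V : Fin n → Ω → ℝ)
    (hU : Measurable U) (hV : ∀ i, Measurable (V i))
    (hUunif : P.map U = volume.restrict (Set.Ioo (0 : ℝ) 1))
    (hVunif : ∀ i, P.map (V i) = volume.restrict (Set.Ioo (0 : ℝ) 1))
    (hindep : ProbabilityTheory.iIndepFun
      (Fin.cons U V : Fin (n + 1) → Ω → ℝ) P)
    (γ₁ γ₂ : ℝ) (h1 : 0 < γ₁) (h12 : γ₁ ≤ γ₂) (h2 : γ₂ < 1)
    (Uγ₁ Uγ₂ : Fin n → Ω → ℝ)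
    (hUγ₁ : ∀ i ω, Uγ₁ i ω = if U ω ≤ γ₁ then γ₁ * V i ω else U ω)
    (hUγ₂ : ∀ i ω, Uγ₂ i ω = if U ω ≤ γ₂ then γ₂ * V i ω else U ω) :
    ∀ a : Fin n → ℝ,
      P {ω | ∀ i, Uγ₂ i ω ≤ a i} ≤ P {ω | ∀ i, Uγ₁ i ω ≤ a i} := by
  intro a
  have h20 : 0 < γ₂ := lt_of_lt_of_le h1 h12
  have h11 : γ₁ < 1 := lt_of_le_of_lt h12 h2
  cases n with
  | zero =>
    have hu : ∀ (W : Fin 0 → Ω → ℝ), {ω | ∀ i, W i ω ≤ a i} = Set.univ :=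
      fun W => Set.eq_univ_of_forall fun ω i => i.elim0
    rw [hu Uγ₁, hu Uγ₂]
  | succ k =>
    have e₂ : {ω | ∀ i, Uγ₂ i ω ≤ a i}
        = {ω | ∀ i, (if U ω ≤ γ₂ then γ₂ * V i ω else U ω) ≤ a i} := by
      ext ω; simp only [Set.mem_setOf_eq, hUγ₂]
    have e₁ : {ω | ∀ i, Uγ₁ i ω ≤ a i}
        = {ω | ∀ i, (if U ω ≤ γ₁ then γ₁ * V i ω else U ω) ≤ a i} := by
      ext ω; simp only [Set.mem_setOf_eq, hUγ₁]
    rw [e₁, e₂,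
      prob_formula P k U V hU hV hUunif hVunif hindep γ₂ h20 h2 a,
      prob_formula P k U V hU hV hUunif hVunif hindep γ₁ h1 h11 a,
      ← ENNReal.ofReal_add
        (mul_nonneg h20.le (Finset.prod_nonneg fun i _ => factor_nonneg _)) (le_max_left _ _),
      ← ENNReal.ofReal_add
        (mul_nonneg h1.le (Finset.prod_nonneg fun i _ => factor_nonneg _)) (le_max_left _ _)]
    exact ENNReal.ofReal_le_ofReal (key_ineq k a γ₁ γ₂ h1 h12 h2)
end

section
/- Let p, γ, δ ∈ (0,1) with γ > 1−p, and let U, V_i, V_j be independent uniform random variables on (0,1). Define X_k^γ = 1_{[1−p,1)}(γ V_k 1_{U≤γ} + U 1_{U>γ}) for k ∈ {i,j}. Then X_i^γ, X_j^γ are Bernoulli(p) variables and their Pearson correlation equals ((1−p)(1−γ))/(pγ). In particular the correlation equals δ if and only if γ = 1/(1 + δ·p/(1−p)). -/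
open MeasureTheory

/-- Pearson correlation of two real random variables. -/
noncomputable def pearson {Ω : Type*} [MeasurableSpace Ω] (P : Measure Ω)
    (X Y : Ω → ℝ) : ℝ :=
  ((∫ ω, X ω * Y ω ∂P) - (∫ ω, X ω ∂P) * (∫ ω, Y ω ∂P)) /
    Real.sqrt (((∫ ω, X ω ^ 2 ∂P) - (∫ ω, X ω ∂P) ^ 2) *
      ((∫ ω, Y ω ^ 2 ∂P) - (∫ ω, Y ω ∂P) ^ 2))

/-- For Bernoulli marginals `B(1,p)` (quantile function `1_{[1−p,1)}`), the variables
`X_k^γ` are Bernoulli(p) and their Pearson correlation equals `((1−p)(1−γ))/(pγ)`;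
it equals `δ` iff `γ = 1/(1 + δ p/(1−p))`. -/
theorem pearson_bernoulli {Ω : Type*} [MeasurableSpace Ω] (P : Measure Ω)
    [IsProbabilityMeasure P]
    (p γ δ : ℝ) (hp : p ∈ Set.Ioo (0 : ℝ) 1) (hγ : γ ∈ Set.Ioo (0 : ℝ) 1)
    (hδ : δ ∈ Set.Ioo (0 : ℝ) 1) (hγp : 1 - p < γ)
    (U Vi Vj : Ω → ℝ)
    (hU : Measurable U) (hVi : Measurable Vi) (hVj : Measurable Vj)
    (hUunif : P.map U = volume.restrict (Set.Ioo (0 : ℝ) 1))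
    (hViunif : P.map Vi = volume.restrict (Set.Ioo (0 : ℝ) 1))
    (hVjunif : P.map Vj = volume.restrict (Set.Ioo (0 : ℝ) 1))
    (hindep : ProbabilityTheory.iIndepFun
      (![U, Vi, Vj] : Fin 3 → Ω → ℝ) P)
    (Xi Xj : Ω → ℝ)
    (hXi : ∀ ω, Xi ω = Set.indicator (Set.Ico (1 - p) 1) (fun _ => (1 : ℝ))
      (if U ω ≤ γ then γ * Vi ω else U ω))
    (hXj : ∀ ω, Xj ω = Set.indicator (Set.Ico (1 - p) 1) (fun _ => (1 : ℝ))
      (if U ω ≤ γ then γ * Vj ω else U ω)) :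
    (P {ω | Xi ω = 1}).toReal = p ∧ (P {ω | Xj ω = 1}).toReal = p ∧
    pearson P Xi Xj = (1 - p) * (1 - γ) / (p * γ) ∧
    (pearson P Xi Xj = δ ↔ γ = 1 / (1 + δ * (p / (1 - p)))) := by
  obtain ⟨hp0, hp1⟩ := hp
  obtain ⟨hγ0, hγ1⟩ := hγ
  obtain ⟨hδ0, hδ1⟩ := hδ
  set S : Set ℝ := Set.Ico ((1-p)/γ) (1/γ) with hSdef
  have hmS : MeasurableSet S := measurableSet_Ico
  -- uniform measure computations
  have uniMeas : ∀ (W : Ω → ℝ), Measurable W → P.map W = volume.restrict (Set.Ioo 0 1) →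
      ∀ (s : Set ℝ), MeasurableSet s → P (W ⁻¹' s) = volume (s ∩ Set.Ioo 0 1) := by
    intro W hW hWm s hs
    rw [← Measure.map_apply hW hs, hWm, Measure.restrict_apply hs]
  have hUγ : P (U ⁻¹' Set.Iic γ) = ENNReal.ofReal γ := by
    rw [uniMeas U hU hUunif _ measurableSet_Iic]
    have : Set.Iic γ ∩ Set.Ioo (0:ℝ) 1 = Set.Ioc 0 γ := by
      ext x
      simp only [Set.mem_inter_iff, Set.mem_Iic, Set.mem_Ioo, Set.mem_Ioc]
      constructor
      · rintro ⟨h1, h2, h3⟩; exact ⟨h2, h1⟩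
      · rintro ⟨h1, h2⟩; exact ⟨h2, h1, by linarith⟩
    rw [this, Real.volume_Ioc]
    norm_num
  have hViS : P (Vi ⁻¹' S) = ENNReal.ofReal ((γ - (1-p))/γ) := by
    rw [uniMeas Vi hVi hViunif _ hmS]
    have : S ∩ Set.Ioo (0:ℝ) 1 = Set.Ico ((1-p)/γ) 1 := by
      ext x
      simp only [hSdef, Set.mem_inter_iff, Set.mem_Ico, Set.mem_Ioo]
      constructor
      · rintro ⟨⟨h1, h2⟩, h3, h4⟩; exact ⟨h1, h4⟩
      · rintro ⟨h1, h2⟩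
        refine ⟨⟨h1, ?_⟩, ?_, h2⟩
        · have : (1:ℝ) < 1/γ := by
            rw [lt_div_iff₀ hγ0]; linarith
          linarith
        · have : (0:ℝ) < (1-p)/γ := div_pos (by linarith) hγ0
          linarith
    rw [this, Real.volume_Ico]
    congr 1
    field_simp
  have hVjS : P (Vj ⁻¹' S) = ENNReal.ofReal ((γ - (1-p))/γ) := by
    rw [uniMeas Vj hVj hVjunif _ hmS]
    have : S ∩ Set.Ioo (0:ℝ) 1 = Set.Ico ((1-p)/γ) 1 := by
      ext x
      simp only [hSdef, Set.mem_inter_iff, Set.mem_Ico, Set.mem_Ioo]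
      constructor
      · rintro ⟨⟨h1, h2⟩, h3, h4⟩; exact ⟨h1, h4⟩
      · rintro ⟨h1, h2⟩
        refine ⟨⟨h1, ?_⟩, ?_, h2⟩
        · have : (1:ℝ) < 1/γ := by
            rw [lt_div_iff₀ hγ0]; linarith
          linarith
        · have : (0:ℝ) < (1-p)/γ := div_pos (by linarith) hγ0
          linarith
    rw [this, Real.volume_Ico]
    congr 1
    field_simp
  have hmE2 : MeasurableSet (Set.Ioi γ ∩ Set.Ico (1-p) 1) :=
    measurableSet_Ioi.inter measurableSet_Ico
  have hUE2 : P (U ⁻¹' (Set.Ioi γ ∩ Set.Ico (1-p) 1)) = ENNReal.ofReal (1-γ) := by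
    rw [uniMeas U hU hUunif _ hmE2]
    have : (Set.Ioi γ ∩ Set.Ico (1-p) 1) ∩ Set.Ioo (0:ℝ) 1 = Set.Ioo γ 1 := by
      ext x
      simp only [Set.mem_inter_iff, Set.mem_Ioi, Set.mem_Ico, Set.mem_Ioo]
      constructor
      · rintro ⟨⟨h1, h2, h3⟩, h4, h5⟩; exact ⟨h1, h3⟩
      · rintro ⟨h1, h2⟩; exact ⟨⟨h1, by linarith, h2⟩, by linarith, h2⟩
    rw [this, Real.volume_Ioo]
  -- events
  set E1 : Set Ω := U ⁻¹' Set.Iic γ with hE1def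
  set E2 : Set Ω := U ⁻¹' (Set.Ioi γ ∩ Set.Ico (1-p) 1) with hE2def
  set Fi : Set Ω := Vi ⁻¹' S with hFidef
  set Fj : Set Ω := Vj ⁻¹' S with hFjdef
  set MA : Set Ω := (E1 ∩ Fi) ∪ E2 with hMAdef
  set MB : Set Ω := (E1 ∩ Fj) ∪ E2 with hMBdef
  have hmE1 : MeasurableSet E1 := hU measurableSet_Iic
  have hmE2' : MeasurableSet E2 := hU hmE2
  have hmFi : MeasurableSet Fi := hVi hmS
  have hmFj : MeasurableSet Fj := hVj hmS
  have hmMA : MeasurableSet MA := (hmE1.inter hmFi).union hmE2'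
  have hmMB : MeasurableSet MB := (hmE1.inter hmFj).union hmE2'
  have hmul : ∀ v : ℝ, (γ * v ∈ Set.Ico (1-p) 1) ↔ v ∈ S := by
    intro v
    simp only [hSdef, Set.mem_Ico]
    constructor
    · rintro ⟨h1, h2⟩
      exact ⟨(div_le_iff₀ hγ0).mpr (by linarith [mul_comm γ v]),
        (lt_div_iff₀ hγ0).mpr (by linarith [mul_comm γ v])⟩
    · rintro ⟨h1, h2⟩
      rw [div_le_iff₀ hγ0] at h1
      rw [lt_div_iff₀ hγ0] at h2
      exact ⟨by linarith [mul_comm γ v], by linarith [mul_comm γ v]⟩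
  have hmemA : ∀ ω, ((if U ω ≤ γ then γ * Vi ω else U ω) ∈ Set.Ico (1-p) 1) ↔ ω ∈ MA := by
    intro ω
    by_cases h : U ω ≤ γ
    · simp only [if_pos h, hMAdef, hE1def, hE2def, hFidef, Set.mem_union, Set.mem_inter_iff,
        Set.mem_preimage, Set.mem_Iic, Set.mem_Ioi, Set.mem_Ico, hmul]
      constructor
      · intro hv; exact Or.inl ⟨h, hv⟩
      · rintro (⟨_, hv⟩ | ⟨h1, _⟩)
        · exact hv
        · exact absurd h (not_le.mpr h1)
    · simp only [if_neg h, hMAdef, hE1def, hE2def, hFidef, Set.mem_union, Set.mem_inter_iff,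
        Set.mem_preimage, Set.mem_Iic, Set.mem_Ioi, Set.mem_Ico]
      push_neg at h
      constructor
      · intro hv; exact Or.inr ⟨h, hv.1, hv.2⟩
      · rintro (⟨h1, _⟩ | ⟨_, hv⟩)
        · linarith
        · exact hv
  have hmemB : ∀ ω, ((if U ω ≤ γ then γ * Vj ω else U ω) ∈ Set.Ico (1-p) 1) ↔ ω ∈ MB := by
    intro ω
    by_cases h : U ω ≤ γ
    · simp only [if_pos h, hMBdef, hE1def, hE2def, hFjdef, Set.mem_union, Set.mem_inter_iff,
        Set.mem_preimage, Set.mem_Iic, Set.mem_Ioi, Set.mem_Ico, hmul]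
      constructor
      · intro hv; exact Or.inl ⟨h, hv⟩
      · rintro (⟨_, hv⟩ | ⟨h1, _⟩)
        · exact hv
        · exact absurd h (not_le.mpr h1)
    · simp only [if_neg h, hMBdef, hE1def, hE2def, hFjdef, Set.mem_union, Set.mem_inter_iff,
        Set.mem_preimage, Set.mem_Iic, Set.mem_Ioi, Set.mem_Ico]
      push_neg at h
      constructor
      · intro hv; exact Or.inr ⟨h, hv.1, hv.2⟩
      · rintro (⟨h1, _⟩ | ⟨_, hv⟩)
        · linarith
        · exact hv
  -- indicator forms
  have hXiInd : ∀ ω, Xi ω = Set.indicator MA (fun _ => (1:ℝ)) ω := by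
    intro ω
    rw [hXi]
    by_cases h : (if U ω ≤ γ then γ * Vi ω else U ω) ∈ Set.Ico (1-p) 1
    · rw [Set.indicator_of_mem h, Set.indicator_of_mem ((hmemA ω).mp h)]
    · rw [Set.indicator_of_notMem h,
        Set.indicator_of_notMem (fun hc => h ((hmemA ω).mpr hc))]
  have hXjInd : ∀ ω, Xj ω = Set.indicator MB (fun _ => (1:ℝ)) ω := by
    intro ω
    rw [hXj]
    by_cases h : (if U ω ≤ γ then γ * Vj ω else U ω) ∈ Set.Ico (1-p) 1
    · rw [Set.indicator_of_mem h, Set.indicator_of_mem ((hmemB ω).mp h)]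
    · rw [Set.indicator_of_notMem h,
        Set.indicator_of_notMem (fun hc => h ((hmemB ω).mpr hc))]
  -- independence
  have hIndUVi : ProbabilityTheory.IndepFun U Vi P := by
    have := hindep.indepFun (i := 0) (j := 1) (by decide)
    simpa using this
  have hdisj : Disjoint (E1 ∩ Fi) E2 := by
    rw [Set.disjoint_left]
    rintro ω ⟨h1, _⟩ h2
    simp only [hE1def, Set.mem_preimage, Set.mem_Iic] at h1
    simp only [hE2def, Set.mem_preimage, Set.mem_inter_iff, Set.mem_Ioi] at h2
    exact absurd h1 (not_le.mpr h2.1)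
  have hdisjB : Disjoint (E1 ∩ Fj) E2 := by
    rw [Set.disjoint_left]
    rintro ω ⟨h1, _⟩ h2
    simp only [hE1def, Set.mem_preimage, Set.mem_Iic] at h1
    simp only [hE2def, Set.mem_preimage, Set.mem_inter_iff, Set.mem_Ioi] at h2
    exact absurd h1 (not_le.mpr h2.1)
  have hq0 : (0:ℝ) ≤ (γ - (1-p))/γ := div_nonneg (by linarith) hγ0.le
  have hPMA : P MA = ENNReal.ofReal p := by
    rw [hMAdef, measure_union hdisj hmE2',
      hIndUVi.measure_inter_preimage_eq_mul _ _ measurableSet_Iic hmS, hUγ, hViS, hUE2,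
      ← ENNReal.ofReal_mul hγ0.le,
      ← ENNReal.ofReal_add (mul_nonneg hγ0.le hq0) (by linarith)]
    congr 1
    field_simp
    ring
  have hIndUVj : ProbabilityTheory.IndepFun U Vj P := by
    have := hindep.indepFun (i := 0) (j := 2) (by decide)
    simpa using this
  have hPMB : P MB = ENNReal.ofReal p := by
    rw [hMBdef, measure_union hdisjB hmE2',
      hIndUVj.measure_inter_preimage_eq_mul _ _ measurableSet_Iic hmS, hUγ, hVjS, hUE2,
      ← ENNReal.ofReal_mul hγ0.le,
      ← ENNReal.ofReal_add (mul_nonneg hγ0.le hq0) (by linarith)]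
    congr 1
    field_simp
    ring
  -- triple intersection
  have htriple : P (E1 ∩ (Fi ∩ Fj)) = P E1 * (P Fi * P Fj) := by
    have key := hindep.measure_inter_preimage_eq_mul (S := Finset.univ)
      (sets := ![Set.Iic γ, S, S])
      (fun k _ => by fin_cases k <;> simp [hmS, measurableSet_Iic])
    have hset : (⋂ k ∈ Finset.univ, (![U, Vi, Vj] k) ⁻¹' (![Set.Iic γ, S, S] k))
        = E1 ∩ (Fi ∩ Fj) := by
      ext ω
      simp only [Set.mem_iInter, Finset.mem_univ, Set.iInter_true, Set.mem_inter_iff,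
        hE1def, hFidef, hFjdef, Set.mem_preimage]
      constructor
      · intro h
        exact ⟨by simpa using h 0, by simpa using h 1, by simpa using h 2⟩
      · rintro ⟨h0, h1, h2⟩ k
        fin_cases k <;> simpa
    rw [hset] at key
    rw [key, Fin.prod_univ_three]
    simp only [Matrix.cons_val_zero, Matrix.cons_val_one, Matrix.head_cons,
      Matrix.cons_val_two, Matrix.tail_cons]
    rw [hE1def, hFidef, hFjdef, mul_assoc]
  have hABeq : MA ∩ MB = (E1 ∩ (Fi ∩ Fj)) ∪ E2 := by
    ext ω
    simp only [hMAdef, hMBdef, Set.mem_inter_iff, Set.mem_union]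
    tauto
  have hdisjAB : Disjoint (E1 ∩ (Fi ∩ Fj)) E2 := by
    rw [Set.disjoint_left]
    rintro ω ⟨h1, _⟩ h2
    simp only [hE1def, Set.mem_preimage, Set.mem_Iic] at h1
    simp only [hE2def, Set.mem_preimage, Set.mem_inter_iff, Set.mem_Ioi] at h2
    exact absurd h1 (not_le.mpr h2.1)
  have hcnn : (0:ℝ) ≤ (γ - (1-p))^2/γ + (1-γ) :=
    add_nonneg (by positivity) (by linarith)
  have hPAB : P (MA ∩ MB) = ENNReal.ofReal ((γ - (1-p))^2/γ + (1-γ)) := by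
    rw [hABeq, measure_union hdisjAB hmE2', htriple, hUγ, hViS, hVjS, hUE2,
      ← ENNReal.ofReal_mul hq0, ← ENNReal.ofReal_mul hγ0.le,
      ← ENNReal.ofReal_add (mul_nonneg hγ0.le (mul_nonneg hq0 hq0)) (by linarith)]
    congr 1
    field_simp
  -- integrals
  have hInt1 : ∫ ω, Xi ω ∂P = p := by
    simp only [hXiInd]
    rw [integral_indicator_const (1:ℝ) hmMA, measureReal_def, hPMA, ENNReal.toReal_ofReal hp0.le,
      smul_eq_mul, mul_one]
  have hInt2 : ∫ ω, Xj ω ∂P = p := by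
    simp only [hXjInd]
    rw [integral_indicator_const (1:ℝ) hmMB, measureReal_def, hPMB, ENNReal.toReal_ofReal hp0.le,
      smul_eq_mul, mul_one]
  have hsq1 : ∀ ω, Xi ω ^ 2 = Xi ω := by
    intro ω
    rw [hXiInd ω]
    by_cases h : ω ∈ MA
    · simp [Set.indicator_of_mem h]
    · simp [Set.indicator_of_notMem h]
  have hsq2 : ∀ ω, Xj ω ^ 2 = Xj ω := by
    intro ω
    rw [hXjInd ω]
    by_cases h : ω ∈ MB
    · simp [Set.indicator_of_mem h]
    · simp [Set.indicator_of_notMem h]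
  have hIntsq1 : ∫ ω, Xi ω ^ 2 ∂P = p := by simp only [hsq1]; exact hInt1
  have hIntsq2 : ∫ ω, Xj ω ^ 2 ∂P = p := by simp only [hsq2]; exact hInt2
  have hmulInd : ∀ ω, Xi ω * Xj ω = Set.indicator (MA ∩ MB) (fun _ => (1:ℝ)) ω := by
    intro ω
    rw [hXiInd ω, hXjInd ω]
    by_cases h1 : ω ∈ MA <;> by_cases h2 : ω ∈ MB <;>
      simp [Set.indicator_apply, h1, h2]
  have hIntmul : ∫ ω, Xi ω * Xj ω ∂P = (γ - (1-p))^2/γ + (1-γ) := by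
    simp only [hmulInd]
    rw [integral_indicator_const (1:ℝ) (hmMA.inter hmMB), measureReal_def, hPAB,
      ENNReal.toReal_ofReal hcnn, smul_eq_mul, mul_one]
  -- pearson value
  have hvarpos : (0:ℝ) < p - p^2 := by nlinarith
  have hpear : pearson P Xi Xj = (1 - p) * (1 - γ) / (p * γ) := by
    unfold pearson
    rw [hIntmul, hInt1, hInt2, hIntsq1, hIntsq2,
      Real.sqrt_mul_self hvarpos.le,
      div_eq_div_iff (ne_of_gt hvarpos) (by positivity)]
    field_simp
    ring
  -- marginals
  have hXieq : {ω | Xi ω = 1} = MA := by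
    ext ω
    simp only [Set.mem_setOf_eq, hXiInd ω]
    by_cases h : ω ∈ MA
    · simp [Set.indicator_of_mem h, h]
    · simp [Set.indicator_of_notMem h, h]
  have hXjeq : {ω | Xj ω = 1} = MB := by
    ext ω
    simp only [Set.mem_setOf_eq, hXjInd ω]
    by_cases h : ω ∈ MB
    · simp [Set.indicator_of_mem h, h]
    · simp [Set.indicator_of_notMem h, h]
  refine ⟨by rw [hXieq, hPMA, ENNReal.toReal_ofReal hp0.le],
    by rw [hXjeq, hPMB, ENNReal.toReal_ofReal hp0.le], hpear, ?_⟩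
  rw [hpear]
  have h1p : (0:ℝ) < 1 - p := by linarith
  have hden : (0:ℝ) < 1 - p + δ * p := by nlinarith
  have hr : 1 / (1 + δ * (p / (1 - p))) = (1 - p) / (1 - p + δ * p) := by
    rw [div_eq_div_iff (by positivity) hden.ne']
    field_simp
  have hpγ : p * γ ≠ 0 := by positivity
  constructor
  · intro h
    rw [div_eq_iff hpγ] at h
    rw [hr, eq_div_iff hden.ne']
    linear_combination -h
  · intro h
    rw [hr, eq_div_iff hden.ne'] at h
    rw [div_eq_iff hpγ]
    linear_combination -h
end

section
/- Let μ be the exponential distribution with rate λ > 0 and γ ∈ (0,1). Let U, V_i, V_j be independent uniform variables on (0,1) and X_k^γ = F⁻¹_μ(γV_k 1_{U≤γ} + U 1_{U>γ}) for k ∈ {i,j}, where F⁻¹_μ(u) = −ln(1−u)/λ. Then the Pearson correlation of X_i^γ and X_j^γ equals (1−γ)·(1 + (ln(1−γ))²/γ), independently of λ. -/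
open MeasureTheory

open Set

set_option linter.unusedSectionVars false

lemma abs_log_le {x : ℝ} (hx : 0 < x) (hx1 : x ≤ 1) :
    |Real.log x| ≤ 4 * x ^ (-(4:ℝ)⁻¹) := by
  rw [abs_of_nonpos (Real.log_nonpos hx.le hx1)]
  have h1 : -Real.log x = 4 * Real.log (x ^ (-(4:ℝ)⁻¹)) := by
    rw [Real.log_rpow hx]; ring
  rw [h1]
  have hp : 0 < x ^ (-(4:ℝ)⁻¹) := Real.rpow_pos_of_pos hx _
  have h2 := Real.log_le_sub_one_of_pos hp
  nlinarith

lemma integrableOn_log_pow (n : ℕ) (hn : n ≤ 2) :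
    IntegrableOn (fun x => Real.log x ^ n) (Set.Ioc (0:ℝ) 1) := by
  have hbase : IntegrableOn (fun x : ℝ => x ^ (-(n:ℝ)/4)) (Set.Ioc 0 1) := by
    have h : IntervalIntegrable (fun x : ℝ => x ^ (-(n:ℝ)/4)) volume 0 1 :=
      intervalIntegral.intervalIntegrable_rpow' (by
        have : (n:ℝ) ≤ 2 := by exact_mod_cast hn
        linarith)
    exact (intervalIntegrable_iff_integrableOn_Ioc_of_le zero_le_one).mp h
  have hbound : IntegrableOn (fun x : ℝ => 4^n * x ^ (-(n:ℝ)/4)) (Set.Ioc 0 1) :=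
    hbase.const_mul _
  refine Integrable.mono hbound ((Real.measurable_log.pow_const n).aestronglyMeasurable) ?_
  rw [ae_restrict_iff' measurableSet_Ioc]
  filter_upwards with x hx
  have hx0 := hx.1
  have hx1 := hx.2
  have h1 : |Real.log x| ≤ 4 * x ^ (-(4:ℝ)⁻¹) := abs_log_le hx0 hx1
  have h2 : ((x : ℝ) ^ (-(4:ℝ)⁻¹)) ^ n = x ^ (-(n:ℝ)/4) := by
    rw [← Real.rpow_natCast (x ^ (-(4:ℝ)⁻¹)) n, ← Real.rpow_mul hx0.le]
    ring_nf
  have h3 : ‖Real.log x ^ n‖ = |Real.log x| ^ n := by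
    rw [Real.norm_eq_abs, abs_pow]
  rw [h3]
  calc |Real.log x| ^ n ≤ (4 * x ^ (-(4:ℝ)⁻¹)) ^ n := by
        exact pow_le_pow_left₀ (abs_nonneg _) h1 n
    _ = 4 ^ n * x ^ (-(n:ℝ)/4) := by rw [mul_pow, h2]
    _ ≤ ‖4 ^ n * x ^ (-(n:ℝ)/4)‖ := le_abs_self _

lemma intervalIntegrable_log_pow (n : ℕ) (hn : n ≤ 2) {a b : ℝ} (ha : 0 ≤ a) (hab : a ≤ b)
    (hb : b ≤ 1) : IntervalIntegrable (fun x => Real.log x ^ n) volume a b := by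
  rw [intervalIntegrable_iff_integrableOn_Ioc_of_le hab]
  exact (integrableOn_log_pow n hn).mono_set (Set.Ioc_subset_Ioc ha hb)

lemma integral_log_eq {c : ℝ} (hc : 0 ≤ c) (hc1 : c ≤ 1) :
    ∫ x in (0:ℝ)..c, Real.log x = c * Real.log c - c := by
  rcases eq_or_lt_of_le hc with h | h
  · simp [← h]
  · have := intervalIntegral.integral_eq_sub_of_hasDeriv_right_of_le hc
      (f := fun x => x * Real.log x - x) (f' := fun x => Real.log x)
      ((Real.continuous_mul_log.sub continuous_id).continuousOn)
      (fun x hx => ((Real.hasDerivAt_mul_log hx.1.ne').sub (hasDerivAt_id x)).hasDerivWithinAt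
        |>.congr_deriv (by ring))
      (by simpa using intervalIntegrable_log_pow 1 one_le_two le_rfl hc hc1)
    simpa using this

lemma tendsto_mul_log_sq : Filter.Tendsto (fun x : ℝ => x * Real.log x ^ 2)
    (nhdsWithin 0 (Set.Ioi 0)) (nhds 0) := by
  have h := tendsto_log_mul_rpow_nhdsGT_zero (r := 2⁻¹) (by norm_num)
  have h2 := h.mul h
  rw [mul_zero] at h2
  refine h2.congr' ?_
  filter_upwards [self_mem_nhdsWithin] with x (hx : 0 < x)
  have hxx : (x : ℝ) ^ (2⁻¹:ℝ) * x ^ (2⁻¹:ℝ) = x := by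
    rw [← Real.rpow_add hx]; norm_num
  calc Real.log x * x ^ (2⁻¹:ℝ) * (Real.log x * x ^ (2⁻¹:ℝ))
      = x ^ (2⁻¹:ℝ) * x ^ (2⁻¹:ℝ) * Real.log x ^ 2 := by ring
    _ = x * Real.log x ^ 2 := by rw [hxx]

lemma continuousOn_mul_log_sq {c : ℝ} :
    ContinuousOn (fun x : ℝ => x * Real.log x ^ 2) (Set.Icc 0 c) := by
  intro x hx
  rcases eq_or_ne x 0 with rfl | hx0
  · have ht : Filter.Tendsto (fun x : ℝ => x * Real.log x ^ 2)
        (nhdsWithin 0 (Set.Ici 0)) (nhds 0) := by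
      rw [← Set.Ioi_insert, nhdsWithin_insert]
      refine Filter.Tendsto.sup ?_ tendsto_mul_log_sq
      have h0 := tendsto_pure_nhds (fun x : ℝ => x * Real.log x ^ 2) 0
      norm_num at h0
      exact h0
    have : Filter.Tendsto (fun x : ℝ => x * Real.log x ^ 2)
        (nhdsWithin 0 (Set.Icc 0 c)) (nhds 0) :=
      ht.mono_left (nhdsWithin_mono _ (fun y hy => hy.1))
    simpa [ContinuousWithinAt] using this
  · exact (continuousAt_id.mul ((Real.continuousAt_log hx0).pow 2)).continuousWithinAt

lemma integral_log_sq_eq {c : ℝ} (hc : 0 ≤ c) (hc1 : c ≤ 1) :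
    ∫ x in (0:ℝ)..c, Real.log x ^ 2
      = c * Real.log c ^ 2 - 2 * (c * Real.log c) + 2 * c := by
  rcases eq_or_lt_of_le hc with h | h
  · simp [← h]
  · have key := intervalIntegral.integral_eq_sub_of_hasDeriv_right_of_le hc
      (f := fun x => x * Real.log x ^ 2 - 2 * (x * Real.log x) + 2 * x)
      (f' := fun x => Real.log x ^ 2)
      ((continuousOn_mul_log_sq.sub
        ((continuous_const.mul Real.continuous_mul_log).continuousOn)).add
        ((continuous_const.mul continuous_id).continuousOn))
      (fun x hx => ?_)
      (intervalIntegrable_log_pow 2 le_rfl le_rfl hc hc1)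
    · simpa using key
    · have hx0 : x ≠ 0 := hx.1.ne'
      have h1 : HasDerivAt (fun x : ℝ => x * Real.log x ^ 2)
          (1 * Real.log x ^ 2 + x * (2 * Real.log x ^ 1 * x⁻¹)) x :=
        (hasDerivAt_id x).mul ((Real.hasDerivAt_log hx0).pow 2)
      have h2 : HasDerivAt (fun x : ℝ => 2 * (x * Real.log x)) (2 * (Real.log x + 1)) x :=
        (Real.hasDerivAt_mul_log hx0).const_mul 2
      have h3 : HasDerivAt (fun x : ℝ => 2 * x) 2 x := by
        simpa using (hasDerivAt_id x).const_mul (2:ℝ)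
      have := (h1.sub h2).add h3
      refine (this.congr_deriv ?_).hasDerivWithinAt
      field_simp
      ring

section Gamma
variable {γ : ℝ}

lemma II_one_sub (n : ℕ) (hn : n ≤ 2) :
    IntervalIntegrable (fun u : ℝ => Real.log (1-u) ^ n) volume 0 1 := by
  have h := (intervalIntegrable_log_pow n hn le_rfl zero_le_one le_rfl).comp_sub_left 1
  simpa using h.symm

lemma Int_nu_one_sub (n : ℕ) (hn : n ≤ 2) :
    Integrable (fun u : ℝ => Real.log (1-u) ^ n) (volume.restrict (Set.Ioo 0 1)) :=
  ((intervalIntegrable_iff_integrableOn_Ioc_of_le zero_le_one).mp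
    (II_one_sub n hn)).mono_set Set.Ioo_subset_Ioc_self

lemma II_zero_gamma (n : ℕ) (hn : n ≤ 2) (h0 : 0 ≤ γ) (h1 : γ ≤ 1) :
    IntervalIntegrable (fun t : ℝ => Real.log (1-t) ^ n) volume 0 γ := by
  have h := (intervalIntegrable_log_pow n hn (by linarith) (by linarith : (1:ℝ)-γ ≤ 1)
    le_rfl).comp_sub_left 1
  simpa using h.symm

lemma II_comp_gamma (n : ℕ) (hn : n ≤ 2) (h0 : 0 < γ) (h1 : γ ≤ 1) :
    IntervalIntegrable (fun v : ℝ => Real.log (1-γ*v) ^ n) volume 0 1 := by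
  have h := (II_zero_gamma n hn h0.le h1).comp_mul_left (c := γ)
  simpa [div_self h0.ne'] using h

lemma Int_nu_comp_gamma (n : ℕ) (hn : n ≤ 2) (h0 : 0 < γ) (h1 : γ ≤ 1) :
    Integrable (fun v : ℝ => Real.log (1-γ*v) ^ n) (volume.restrict (Set.Ioo 0 1)) :=
  ((intervalIntegrable_iff_integrableOn_Ioc_of_le zero_le_one).mp
    (II_comp_gamma n hn h0 h1)).mono_set Set.Ioo_subset_Ioc_self

lemma interval_one_sub (n : ℕ) :
    ∫ u in γ..1, Real.log (1-u) ^ n = ∫ s in (0:ℝ)..(1-γ), Real.log s ^ n := by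
  have h := intervalIntegral.integral_comp_sub_left (a := γ) (b := 1)
    (fun s => Real.log s ^ n) 1
  simpa using h

lemma interval_zero_gamma (n : ℕ) (hn : n ≤ 2) (h0 : 0 ≤ γ) (h1 : γ ≤ 1) :
    ∫ t in (0:ℝ)..γ, Real.log (1-t) ^ n
      = (∫ s in (0:ℝ)..1, Real.log s ^ n) - ∫ s in (0:ℝ)..(1-γ), Real.log s ^ n := by
  have h := intervalIntegral.integral_comp_sub_left (a := (0:ℝ)) (b := γ)
    (fun s => Real.log s ^ n) 1
  have hadd := intervalIntegral.integral_add_adjacent_intervals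
    (intervalIntegrable_log_pow n hn (a := 0) (b := 1-γ) (by linarith) (by linarith) (by linarith))
    (intervalIntegrable_log_pow n hn (a := 1-γ) (b := 1) (by linarith) (by linarith) le_rfl)
  simp only [sub_zero] at h
  rw [h]
  linarith

end Gamma

noncomputable abbrev nu : Measure ℝ := volume.restrict (Set.Ioo (0:ℝ) 1)

instance nu_prob : IsProbabilityMeasure nu :=
  ⟨by simp⟩

section Gamma2
variable {γ : ℝ}

lemma ite_abs_le (c : Prop) [Decidable c] (x y : ℝ) : |if c then x else y| ≤ |x| + |y| := by
  split
  · exact le_add_of_nonneg_right (abs_nonneg _)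
  · exact le_add_of_nonneg_left (abs_nonneg _)

lemma split_int (h0 : 0 < γ) (h1 : γ < 1) (p : ℝ) (B : ℝ → ℝ)
    (hB : IntegrableOn B (Set.Ioo γ 1)) :
    ∫ u in Set.Ioo (0:ℝ) 1, (if u ≤ γ then p else B u)
      = γ * p + ∫ u in Set.Ioo γ 1, B u := by
  have hdisj : Disjoint (Set.Ioc 0 γ) (Set.Ioo γ 1) :=
    Set.disjoint_left.mpr (fun x hx hx' => absurd hx.2 (not_le.mpr hx'.1))
  have hsub : Set.Ioc 0 γ ∪ Set.Ioo γ 1 = Set.Ioo (0:ℝ) 1 :=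
    Set.Ioc_union_Ioo_eq_Ioo h0.le h1
  have hint1 : IntegrableOn (fun u => if u ≤ γ then p else B u) (Set.Ioc 0 γ) := by
    refine (integrableOn_const (s := Set.Ioc 0 γ) (μ := volume) (C := p) (by simp)).congr_fun
      (fun u hu => ?_) measurableSet_Ioc
    simp [hu.2]
  have hint2 : IntegrableOn (fun u => if u ≤ γ then p else B u) (Set.Ioo γ 1) := by
    refine hB.congr_fun (fun u hu => ?_) measurableSet_Ioo
    simp [not_le.mpr hu.1]
  rw [← hsub, setIntegral_union hdisj measurableSet_Ioo hint1 hint2]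
  congr 1
  · rw [setIntegral_congr_fun measurableSet_Ioc (g := fun _ => p) (fun u hu => by simp [hu.2])]
    simp [Real.volume_Ioc, ENNReal.toReal_ofReal h0.le, mul_comm]
    rw [max_eq_left h0.le, mul_comm]
  · exact setIntegral_congr_fun measurableSet_Ioo (fun u hu => by simp [not_le.mpr hu.1])

lemma prod2_int (h0 : 0 < γ) (h1 : γ < 1) (A B : ℝ → ℝ)
    (hAm : Measurable A) (hBm : Measurable B)
    (hA : Integrable A nu) (hB : Integrable B nu) :
    ∫ z : ℝ × ℝ, (if z.1 ≤ γ then A z.2 else B z.1) ∂(nu.prod nu)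
      = γ * (∫ v, A v ∂nu) + ∫ u in Set.Ioo γ 1, B u := by
  have hmeas : Measurable fun z : ℝ × ℝ => if z.1 ≤ γ then A z.2 else B z.1 :=
    Measurable.ite (measurableSet_le measurable_fst measurable_const)
      (hAm.comp measurable_snd) (hBm.comp measurable_fst)
  have hnorm : (fun u => ∫ v, ‖if u ≤ γ then A v else B u‖ ∂nu)
      = fun u => if u ≤ γ then (∫ v, ‖A v‖ ∂nu) else ‖B u‖ := by
    funext u
    by_cases h : u ≤ γ <;> simp [h]
  have hint : Integrable (fun z : ℝ × ℝ => if z.1 ≤ γ then A z.2 else B z.1) (nu.prod nu) := by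
    rw [integrable_prod_iff hmeas.aestronglyMeasurable]
    constructor
    · filter_upwards with u
      by_cases h : u ≤ γ <;> simp only [h, if_true, if_false]
      · exact hA
      · exact integrable_const _
    · rw [hnorm]
      refine Integrable.mono ((integrable_const |∫ v, ‖A v‖ ∂nu|).add hB.norm)
        (Measurable.ite (measurableSet_le measurable_id measurable_const)
          measurable_const hBm.norm).aestronglyMeasurable ?_
      filter_upwards with u
      simp only [Pi.add_apply, Real.norm_eq_abs, abs_norm]
      refine (ite_abs_le (u ≤ γ) _ _).trans ?_
      rw [abs_abs]
      exact le_abs_self _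
  rw [MeasureTheory.integral_prod _ hint]
  have hinner : (fun u => ∫ v, (if u ≤ γ then A v else B u) ∂nu)
      = fun u => if u ≤ γ then (∫ v, A v ∂nu) else B u := by
    funext u; by_cases h : u ≤ γ <;> simp [h]
  rw [hinner]
  exact split_int h0 h1 _ B (IntegrableOn.mono_set hB (Set.Ioo_subset_Ioo h0.le le_rfl))

lemma prod3_int (h0 : 0 < γ) (h1 : γ < 1) (A B : ℝ → ℝ)
    (hAm : Measurable A) (hBm : Measurable B)
    (hA : Integrable A nu) (hB : Integrable B nu) :
    ∫ z : ℝ × ℝ × ℝ, (if z.1 ≤ γ then A z.2.1 * A z.2.2 else B z.1)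
        ∂(nu.prod (nu.prod nu))
      = γ * ((∫ v, A v ∂nu) * (∫ v, A v ∂nu)) + ∫ u in Set.Ioo γ 1, B u := by
  have hA2 : Integrable (fun p : ℝ × ℝ => A p.1 * A p.2) (nu.prod nu) := hA.mul_prod hA
  have hmeas : Measurable fun z : ℝ × ℝ × ℝ =>
      if z.1 ≤ γ then A z.2.1 * A z.2.2 else B z.1 :=
    Measurable.ite (measurableSet_le measurable_fst measurable_const)
      ((hAm.comp (measurable_fst.comp measurable_snd)).mul
        (hAm.comp (measurable_snd.comp measurable_snd)))
      (hBm.comp measurable_fst)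
  have hnorm : (fun u => ∫ p : ℝ × ℝ, ‖if u ≤ γ then A p.1 * A p.2 else B u‖ ∂(nu.prod nu))
      = fun u => if u ≤ γ then (∫ p : ℝ × ℝ, ‖A p.1 * A p.2‖ ∂(nu.prod nu)) else ‖B u‖ := by
    funext u
    by_cases h : u ≤ γ <;> simp [h]
  have hint : Integrable (fun z : ℝ × ℝ × ℝ =>
      if z.1 ≤ γ then A z.2.1 * A z.2.2 else B z.1) (nu.prod (nu.prod nu)) := by
    rw [integrable_prod_iff hmeas.aestronglyMeasurable]
    constructor
    · filter_upwards with u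
      by_cases h : u ≤ γ <;> simp only [h, if_true, if_false]
      · exact hA2
      · exact integrable_const _
    · rw [hnorm]
      refine Integrable.mono
        ((integrable_const |∫ p : ℝ × ℝ, ‖A p.1 * A p.2‖ ∂(nu.prod nu)|).add hB.norm)
        (Measurable.ite (measurableSet_le measurable_id measurable_const)
          measurable_const hBm.norm).aestronglyMeasurable ?_
      filter_upwards with u
      simp only [Pi.add_apply, Real.norm_eq_abs, abs_norm]
      refine (ite_abs_le (u ≤ γ) _ _).trans ?_
      rw [abs_abs]
      exact le_abs_self _
  rw [MeasureTheory.integral_prod _ hint]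
  have hinner : (fun u => ∫ p : ℝ × ℝ, (if u ≤ γ then A p.1 * A p.2 else B u) ∂(nu.prod nu))
      = fun u => if u ≤ γ then ((∫ v, A v ∂nu) * (∫ v, A v ∂nu)) else B u := by
    funext u
    by_cases h : u ≤ γ <;> simp only [h, if_true, if_false]
    · rw [MeasureTheory.integral_prod_mul]
    · simp
  rw [hinner]
  exact split_int h0 h1 _ B (IntegrableOn.mono_set hB (Set.Ioo_subset_Ioo h0.le le_rfl))



lemma val_a (n : ℕ) (h0 : 0 < γ) :
    ∫ v, Real.log (1-γ*v) ^ n ∂nu = γ⁻¹ * ∫ t in (0:ℝ)..γ, Real.log (1-t) ^ n := by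
  show (∫ v in Set.Ioo (0:ℝ) 1, Real.log (1-γ*v) ^ n) = _
  rw [← integral_Ioc_eq_integral_Ioo, ← intervalIntegral.integral_of_le zero_le_one]
  have h := intervalIntegral.integral_comp_mul_left (a := (0:ℝ)) (b := 1)
    (fun t => Real.log (1-t) ^ n) h0.ne'
  simpa using h

lemma val_b (n : ℕ) (h1 : γ ≤ 1) :
    ∫ u in Set.Ioo γ 1, Real.log (1-u) ^ n = ∫ s in (0:ℝ)..(1-γ), Real.log s ^ n := by
  rw [← integral_Ioc_eq_integral_Ioo, ← intervalIntegral.integral_of_le h1, interval_one_sub]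

end Gamma2

noncomputable def Af (γ : ℝ) (v : ℝ) : ℝ := -Real.log (1 - γ * v)
noncomputable def Bf (u : ℝ) : ℝ := -Real.log (1 - u)

lemma Af_meas (γ : ℝ) : Measurable (Af γ) :=
  (Real.measurable_log.comp (measurable_const.sub (measurable_const.mul measurable_id))).neg

lemma Bf_meas : Measurable Bf :=
  (Real.measurable_log.comp (measurable_const.sub measurable_id)).neg

lemma e_log_one : ∫ s in (0:ℝ)..1, Real.log s ^ 1 = -1 := by
  simp only [pow_one]
  rw [integral_log_eq zero_le_one le_rfl]
  simp

lemma e_log_sq_one : ∫ s in (0:ℝ)..1, Real.log s ^ 2 = 2 := by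
  rw [integral_log_sq_eq zero_le_one le_rfl]
  simp

section Vals
variable {γ : ℝ} (h0 : 0 < γ) (h1 : γ < 1)
include h0 h1

lemma Af_int : Integrable (Af γ) nu := by
  have h := (Int_nu_comp_gamma 1 one_le_two h0 h1.le).neg
  simp only [pow_one] at h
  exact h

lemma Af_sq_int : Integrable (fun v => Af γ v ^ 2) nu := by
  have h := Int_nu_comp_gamma 2 le_rfl h0 h1.le
  have he : (fun v => Af γ v ^ 2) = fun v => Real.log (1 - γ * v) ^ 2 := by
    funext v; simp [Af, neg_sq]
  rw [he]; exact h

lemma Bf_int : Integrable Bf nu := by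
  have h := (Int_nu_one_sub 1 one_le_two).neg
  simp only [pow_one] at h
  exact h

lemma Bf_sq_int : Integrable (fun u => Bf u ^ 2) nu := by
  have h := Int_nu_one_sub 2 le_rfl
  have he : (fun u => Bf u ^ 2) = fun u => Real.log (1 - u) ^ 2 := by
    funext u; simp [Bf, neg_sq]
  rw [he]; exact h

lemma e_log_c : ∫ s in (0:ℝ)..(1-γ), Real.log s ^ 1
    = (1-γ) * Real.log (1-γ) - (1-γ) := by
  simp only [pow_one]
  rw [integral_log_eq (by linarith) (by linarith)]

lemma e_log_sq_c : ∫ s in (0:ℝ)..(1-γ), Real.log s ^ 2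
    = (1-γ) * Real.log (1-γ) ^ 2 - 2 * ((1-γ) * Real.log (1-γ)) + 2 * (1-γ) := by
  rw [integral_log_sq_eq (by linarith) (by linarith)]

lemma Af_val : ∫ v, Af γ v ∂nu = γ⁻¹ * (1 + (1-γ) * Real.log (1-γ) - (1-γ)) := by
  have h3 : ∫ v, Af γ v ∂nu = -∫ v, Real.log (1-γ*v) ^ 1 ∂nu := by
    rw [← integral_neg]
    refine integral_congr_ae (Filter.Eventually.of_forall fun v => ?_)
    simp [Af]
  rw [h3, val_a 1 h0, interval_zero_gamma 1 one_le_two h0.le h1.le, e_log_one,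
    e_log_c h0 h1]
  ring

lemma Af_sq_val : ∫ v, Af γ v ^ 2 ∂nu
    = γ⁻¹ * (2 - ((1-γ) * Real.log (1-γ) ^ 2 - 2 * ((1-γ) * Real.log (1-γ)) + 2 * (1-γ))) := by
  have h3 : ∫ v, Af γ v ^ 2 ∂nu = ∫ v, Real.log (1-γ*v) ^ 2 ∂nu := by
    refine integral_congr_ae (Filter.Eventually.of_forall fun v => ?_)
    simp [Af, neg_sq]
  rw [h3, val_a 2 h0, interval_zero_gamma 2 le_rfl h0.le h1.le, e_log_sq_one,
    e_log_sq_c h0 h1]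

lemma Bf_val : ∫ u in Set.Ioo γ 1, Bf u = (1-γ) - (1-γ) * Real.log (1-γ) := by
  have h3 : ∫ u in Set.Ioo γ 1, Bf u = -∫ u in Set.Ioo γ 1, Real.log (1-u) ^ 1 := by
    rw [← integral_neg]
    refine setIntegral_congr_fun measurableSet_Ioo fun u _ => ?_
    simp [Bf]
  rw [h3, val_b 1 h1.le, e_log_c h0 h1]
  ring

lemma Bf_sq_val : ∫ u in Set.Ioo γ 1, Bf u ^ 2
    = (1-γ) * Real.log (1-γ) ^ 2 - 2 * ((1-γ) * Real.log (1-γ)) + 2 * (1-γ) := by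
  have h3 : ∫ u in Set.Ioo γ 1, Bf u ^ 2 = ∫ u in Set.Ioo γ 1, Real.log (1-u) ^ 2 := by
    refine setIntegral_congr_fun measurableSet_Ioo fun u _ => ?_
    simp [Bf, neg_sq]
  rw [h3, val_b 2 h1.le, e_log_sq_c h0 h1]

end Vals

/-- For exponential marginals `Exp(λ)` (quantile function `u ↦ −ln(1−u)/λ`), the Pearson
correlation of `X_i^γ` and `X_j^γ` equals `(1−γ)(1 + (ln(1−γ))²/γ)`, independently of `λ`. -/
theorem pearson_exponential {Ω : Type*} [MeasurableSpace Ω] (P : Measure Ω)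
    [IsProbabilityMeasure P]
    (l γ : ℝ) (hl : 0 < l) (hγ : γ ∈ Set.Ioo (0 : ℝ) 1)
    (U Vi Vj : Ω → ℝ)
    (hU : Measurable U) (hVi : Measurable Vi) (hVj : Measurable Vj)
    (hUunif : P.map U = volume.restrict (Set.Ioo (0 : ℝ) 1))
    (hViunif : P.map Vi = volume.restrict (Set.Ioo (0 : ℝ) 1))
    (hVjunif : P.map Vj = volume.restrict (Set.Ioo (0 : ℝ) 1))
    (hindep : ProbabilityTheory.iIndepFun
      (![U, Vi, Vj] : Fin 3 → Ω → ℝ) P)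
    (Xi Xj : Ω → ℝ)
    (hXi : ∀ ω, Xi ω = -Real.log (1 - (if U ω ≤ γ then γ * Vi ω else U ω)) / l)
    (hXj : ∀ ω, Xj ω = -Real.log (1 - (if U ω ≤ γ then γ * Vj ω else U ω)) / l) :
    pearson P Xi Xj = (1 - γ) * (1 + (Real.log (1 - γ)) ^ 2 / γ) := by
  obtain ⟨h0, h1⟩ := hγ
  have hl0 : l ≠ 0 := hl.ne'
  have hγ0 : γ ≠ 0 := h0.ne'
  -- measurability of the family
  have hmeasV : ∀ i, Measurable (![U, Vi, Vj] i) := by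
    intro i
    fin_cases i
    · exact hU
    · exact hVi
    · exact hVj
  -- joint laws
  have hmapUVi : P.map (fun ω => (U ω, Vi ω)) = nu.prod nu := by
    rw [(ProbabilityTheory.indepFun_iff_map_prod_eq_prod_map_map hU.aemeasurable
      hVi.aemeasurable).mp (hindep.indepFun (show (0:Fin 3) ≠ 1 by decide)),
      hUunif, hViunif]
  have hmapUVj : P.map (fun ω => (U ω, Vj ω)) = nu.prod nu := by
    rw [(ProbabilityTheory.indepFun_iff_map_prod_eq_prod_map_map hU.aemeasurable
      hVj.aemeasurable).mp (hindep.indepFun (show (0:Fin 3) ≠ 2 by decide)),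
      hUunif, hVjunif]
  have hmapVV : P.map (fun ω => (Vi ω, Vj ω)) = nu.prod nu := by
    rw [(ProbabilityTheory.indepFun_iff_map_prod_eq_prod_map_map hVi.aemeasurable
      hVj.aemeasurable).mp (hindep.indepFun (show (1:Fin 3) ≠ 2 by decide)),
      hViunif, hVjunif]
  have hIT : ProbabilityTheory.IndepFun U (fun ω => (Vi ω, Vj ω)) P :=
    (hindep.indepFun_prodMk hmeasV 1 2 0 (by decide) (by decide)).symm
  have hmapT : P.map (fun ω => (U ω, (Vi ω, Vj ω))) = nu.prod (nu.prod nu) := by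
    rw [(ProbabilityTheory.indepFun_iff_map_prod_eq_prod_map_map hU.aemeasurable
      (hVi.aemeasurable.prodMk hVj.aemeasurable)).mp hIT, hUunif, hmapVV]
  -- transfer lemmas
  have key2 : ∀ (W : Ω → ℝ), Measurable W →
      P.map (fun ω => (U ω, W ω)) = nu.prod nu →
      ∀ (φ : ℝ × ℝ → ℝ), Measurable φ →
      ∫ ω, φ (U ω, W ω) ∂P = ∫ z, φ z ∂(nu.prod nu) := by
    intro W hW hmap φ hφ
    rw [← hmap, integral_map (hU.aemeasurable.prodMk hW.aemeasurable)
      hφ.aestronglyMeasurable]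
  have key3 : ∀ (φ : ℝ × (ℝ × ℝ) → ℝ), Measurable φ →
      ∫ ω, φ (U ω, (Vi ω, Vj ω)) ∂P = ∫ z, φ z ∂(nu.prod (nu.prod nu)) := by
    intro φ hφ
    rw [← hmapT, integral_map (hU.aemeasurable.prodMk
      (hVi.aemeasurable.prodMk hVj.aemeasurable)) hφ.aestronglyMeasurable]
  -- measurable integrands
  have hφ1m : Measurable (fun z : ℝ × ℝ => (if z.1 ≤ γ then Af γ z.2 else Bf z.1) / l) :=
    (Measurable.ite (measurableSet_le measurable_fst measurable_const)
      ((Af_meas γ).comp measurable_snd) (Bf_meas.comp measurable_fst)).div_const l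
  have hφ2m : Measurable (fun z : ℝ × ℝ =>
      (if z.1 ≤ γ then Af γ z.2 ^ 2 else Bf z.1 ^ 2) / l ^ 2) :=
    (Measurable.ite (measurableSet_le measurable_fst measurable_const)
      (((Af_meas γ).comp measurable_snd).pow_const 2)
      ((Bf_meas.comp measurable_fst).pow_const 2)).div_const _
  have hφ3m : Measurable (fun z : ℝ × (ℝ × ℝ) =>
      (if z.1 ≤ γ then Af γ z.2.1 * Af γ z.2.2 else Bf z.1 ^ 2) / l ^ 2) :=
    (Measurable.ite (measurableSet_le measurable_fst measurable_const)
      (((Af_meas γ).comp (measurable_fst.comp measurable_snd)).mul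
        ((Af_meas γ).comp (measurable_snd.comp measurable_snd)))
      ((Bf_meas.comp measurable_fst).pow_const 2)).div_const _
  -- pointwise rewrites
  have hXi1 : ∀ ω, Xi ω = (if U ω ≤ γ then Af γ (Vi ω) else Bf (U ω)) / l := by
    intro ω; rw [hXi ω]; by_cases h : U ω ≤ γ <;> simp [h, Af, Bf]
  have hXj1 : ∀ ω, Xj ω = (if U ω ≤ γ then Af γ (Vj ω) else Bf (U ω)) / l := by
    intro ω; rw [hXj ω]; by_cases h : U ω ≤ γ <;> simp [h, Af, Bf]
  have hXi2 : ∀ ω, Xi ω ^ 2 = (if U ω ≤ γ then Af γ (Vi ω) ^ 2 else Bf (U ω) ^ 2) / l ^ 2 := by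
    intro ω; rw [hXi1 ω]; by_cases h : U ω ≤ γ <;> simp [h, div_pow]
  have hXj2 : ∀ ω, Xj ω ^ 2 = (if U ω ≤ γ then Af γ (Vj ω) ^ 2 else Bf (U ω) ^ 2) / l ^ 2 := by
    intro ω; rw [hXj1 ω]; by_cases h : U ω ≤ γ <;> simp [h, div_pow]
  have hXiXj : ∀ ω, Xi ω * Xj ω
      = (if U ω ≤ γ then Af γ (Vi ω) * Af γ (Vj ω) else Bf (U ω) ^ 2) / l ^ 2 := by
    intro ω; rw [hXi1 ω, hXj1 ω]; by_cases h : U ω ≤ γ <;> simp [h, div_pow] <;> ring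
  -- expectations
  have hEXi : ∫ ω, Xi ω ∂P = 1 / l := by
    have step : ∫ ω, (if U ω ≤ γ then Af γ (Vi ω) else Bf (U ω)) / l ∂P
        = ∫ z : ℝ × ℝ, (if z.1 ≤ γ then Af γ z.2 else Bf z.1) / l ∂(nu.prod nu) :=
      key2 Vi hVi hmapUVi _ hφ1m
    simp only [hXi1]
    rw [step, integral_div, prod2_int h0 h1 _ _ (Af_meas γ) Bf_meas
      (Af_int h0 h1) (Bf_int h0 h1), Af_val h0 h1, Bf_val h0 h1]
    rw [show γ * (γ⁻¹ * (1 + (1-γ) * Real.log (1-γ) - (1-γ)))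
        + ((1-γ) - (1-γ) * Real.log (1-γ)) = 1 by field_simp; ring]
  have hEXj : ∫ ω, Xj ω ∂P = 1 / l := by
    have step : ∫ ω, (if U ω ≤ γ then Af γ (Vj ω) else Bf (U ω)) / l ∂P
        = ∫ z : ℝ × ℝ, (if z.1 ≤ γ then Af γ z.2 else Bf z.1) / l ∂(nu.prod nu) :=
      key2 Vj hVj hmapUVj _ hφ1m
    simp only [hXj1]
    rw [step, integral_div, prod2_int h0 h1 _ _ (Af_meas γ) Bf_meas
      (Af_int h0 h1) (Bf_int h0 h1), Af_val h0 h1, Bf_val h0 h1]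
    rw [show γ * (γ⁻¹ * (1 + (1-γ) * Real.log (1-γ) - (1-γ)))
        + ((1-γ) - (1-γ) * Real.log (1-γ)) = 1 by field_simp; ring]
  have hEXisq : ∫ ω, Xi ω ^ 2 ∂P = 2 / l ^ 2 := by
    have step : ∫ ω, (if U ω ≤ γ then Af γ (Vi ω) ^ 2 else Bf (U ω) ^ 2) / l ^ 2 ∂P
        = ∫ z : ℝ × ℝ, (if z.1 ≤ γ then Af γ z.2 ^ 2 else Bf z.1 ^ 2) / l ^ 2
          ∂(nu.prod nu) :=
      key2 Vi hVi hmapUVi _ hφ2m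
    simp only [hXi2]
    rw [step, integral_div, prod2_int h0 h1 _ _ ((Af_meas γ).pow_const 2)
      (Bf_meas.pow_const 2) (Af_sq_int h0 h1) (Bf_sq_int h0 h1),
      Af_sq_val h0 h1, Bf_sq_val h0 h1]
    rw [show γ * (γ⁻¹ * (2 - ((1-γ) * Real.log (1-γ) ^ 2 - 2 * ((1-γ) * Real.log (1-γ))
        + 2 * (1-γ)))) + ((1-γ) * Real.log (1-γ) ^ 2 - 2 * ((1-γ) * Real.log (1-γ))
        + 2 * (1-γ)) = 2 by field_simp; ring]
  have hEXjsq : ∫ ω, Xj ω ^ 2 ∂P = 2 / l ^ 2 := by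
    have step : ∫ ω, (if U ω ≤ γ then Af γ (Vj ω) ^ 2 else Bf (U ω) ^ 2) / l ^ 2 ∂P
        = ∫ z : ℝ × ℝ, (if z.1 ≤ γ then Af γ z.2 ^ 2 else Bf z.1 ^ 2) / l ^ 2
          ∂(nu.prod nu) :=
      key2 Vj hVj hmapUVj _ hφ2m
    simp only [hXj2]
    rw [step, integral_div, prod2_int h0 h1 _ _ ((Af_meas γ).pow_const 2)
      (Bf_meas.pow_const 2) (Af_sq_int h0 h1) (Bf_sq_int h0 h1),
      Af_sq_val h0 h1, Bf_sq_val h0 h1]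
    rw [show γ * (γ⁻¹ * (2 - ((1-γ) * Real.log (1-γ) ^ 2 - 2 * ((1-γ) * Real.log (1-γ))
        + 2 * (1-γ)))) + ((1-γ) * Real.log (1-γ) ^ 2 - 2 * ((1-γ) * Real.log (1-γ))
        + 2 * (1-γ)) = 2 by field_simp; ring]
  have hEprod : ∫ ω, Xi ω * Xj ω ∂P
      = (γ * ((γ⁻¹ * (1 + (1-γ) * Real.log (1-γ) - (1-γ)))
          * (γ⁻¹ * (1 + (1-γ) * Real.log (1-γ) - (1-γ))))
        + ((1-γ) * Real.log (1-γ) ^ 2 - 2 * ((1-γ) * Real.log (1-γ)) + 2 * (1-γ))) / l ^ 2 := by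
    have step : ∫ ω, (if U ω ≤ γ then Af γ (Vi ω) * Af γ (Vj ω) else Bf (U ω) ^ 2) / l ^ 2 ∂P
        = ∫ z : ℝ × (ℝ × ℝ), (if z.1 ≤ γ then Af γ z.2.1 * Af γ z.2.2 else Bf z.1 ^ 2) / l ^ 2
          ∂(nu.prod (nu.prod nu)) :=
      key3 _ hφ3m
    simp only [hXiXj]
    rw [step, integral_div, prod3_int h0 h1 _ _ (Af_meas γ) (Bf_meas.pow_const 2)
      (Af_int h0 h1) (Bf_sq_int h0 h1), Af_val h0 h1, Bf_sq_val h0 h1]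
  -- final computation
  unfold pearson
  rw [hEprod, hEXi, hEXj, hEXisq, hEXjsq]
  have hv : 2 / l ^ 2 - (1 / l) ^ 2 = 1 / l ^ 2 := by
    field_simp
    ring
  rw [hv, Real.sqrt_mul_self (by positivity)]
  field_simp
  ring
end

section
/- Let μ₁,…,μₙ be probability measures on ℝ, U uniform on (0,1), Yᵢ = F⁻¹_{μᵢ}(U), and f : ℝⁿ → ℝ nondecreasing and left-continuous. Define q(α) = f(F⁻¹_{μ₁}(α),…,F⁻¹_{μₙ}(α)). Then for every α ∈ (0,1), the value at risk of f(Y) at level α equals q(α), i.e., inf{ a ∈ ℝ : P(f(Y) > a) ≤ 1−α } = q(α). -/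
open MeasureTheory

/-- Left-continuous quantile function `F⁻¹_μ(u) = inf {a : F_μ(a) ≥ u}`. -/
noncomputable def qf (μ : Measure ℝ) (u : ℝ) : ℝ :=
  sInf {a : ℝ | u ≤ (μ (Set.Iic a)).toReal}

/-- Value at risk at level `α`: `VaR^α(Z) = inf {a : P(Z > a) ≤ 1 − α}`. -/
noncomputable def VaR {Ω : Type*} [MeasurableSpace Ω] (P : Measure Ω)
    (Z : Ω → ℝ) (α : ℝ) : ℝ :=
  sInf {a : ℝ | (P {ω | a < Z ω}).toReal ≤ 1 - α}

section aux

open Set Filter Topology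

variable (μ : Measure ℝ) [IsProbabilityMeasure μ]

lemma F_mono {a b : ℝ} (h : a ≤ b) :
    (μ (Set.Iic a)).toReal ≤ (μ (Set.Iic b)).toReal :=
  ENNReal.toReal_mono (measure_ne_top μ _) (measure_mono (Set.Iic_subset_Iic.2 h))

lemma qf_set_nonempty {u : ℝ} (hu : u < 1) :
    {a : ℝ | u ≤ (μ (Set.Iic a)).toReal}.Nonempty := by
  have h1 : Tendsto (fun x : ℝ => μ (Set.Iic x)) atTop (𝓝 (μ Set.univ)) :=
    tendsto_measure_Iic_atTop μ
  have h2 : Tendsto (fun x : ℝ => (μ (Set.Iic x)).toReal) atTop (𝓝 1) := by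
    have := (ENNReal.tendsto_toReal (a := μ Set.univ) (measure_ne_top μ _)).comp h1
    simpa [measure_univ, Function.comp_def] using this
  have h3 : ∀ᶠ x : ℝ in atTop, u ≤ (μ (Set.Iic x)).toReal :=
    h2.eventually (eventually_ge_nhds hu)
  obtain ⟨a, ha⟩ := h3.exists
  exact ⟨a, ha⟩

lemma qf_set_bddBelow {u : ℝ} (hu : 0 < u) :
    BddBelow {a : ℝ | u ≤ (μ (Set.Iic a)).toReal} := by
  have h1 : Tendsto (fun x : ℝ => μ (Set.Iic x)) atBot (𝓝 0) := by
    have h := tendsto_measure_iInter_atBot (μ := μ) (s := fun x : ℝ => Set.Iic x)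
      (fun i => measurableSet_Iic.nullMeasurableSet) (fun a b hab => Set.Iic_subset_Iic.2 hab)
      ⟨0, measure_ne_top μ _⟩
    have he : (⋂ x : ℝ, Set.Iic x) = (∅ : Set ℝ) := by
      ext y; simp only [Set.mem_iInter, Set.mem_Iic, Set.mem_empty_iff_false, iff_false]
      push_neg; exact ⟨y - 1, by linarith⟩
    simpa [he, Function.comp_def] using h
  have h2 : Tendsto (fun x : ℝ => (μ (Set.Iic x)).toReal) atBot (𝓝 0) := by
    have := (ENNReal.tendsto_toReal (a := (0 : ENNReal)) (by simp)).comp h1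
    simpa [Function.comp_def] using this
  have h3 : ∀ᶠ x : ℝ in atBot, (μ (Set.Iic x)).toReal < u :=
    h2.eventually (eventually_lt_nhds hu)
  obtain ⟨b, hb⟩ := h3.exists
  refine ⟨b, fun a ha => ?_⟩
  by_contra hab
  push_neg at hab
  exact absurd ha (by simpa using lt_of_le_of_lt (F_mono μ hab.le) hb)

lemma qf_mono {u v : ℝ} (hu : 0 < u) (hv : v < 1) (huv : u ≤ v) : qf μ u ≤ qf μ v :=
  csInf_le_csInf (qf_set_bddBelow μ hu) (qf_set_nonempty μ hv)
    (fun a ha => le_trans huv ha)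

lemma qf_leftLim {α : ℝ} (hα : α ∈ Set.Ioo (0:ℝ) 1) {ε : ℝ} (hε : 0 < ε) :
    ∃ β ∈ Set.Ioo (0:ℝ) α, qf μ α - ε < qf μ β := by
  by_contra h
  push_neg at h
  have hc : qf μ α ≤ qf μ α - ε := by
    refine le_of_forall_gt_imp_ge_of_dense fun d hd => ?_
    refine csInf_le (qf_set_bddBelow μ hα.1) ?_
    show α ≤ (μ (Set.Iic d)).toReal
    refine le_of_forall_lt fun c hc => ?_
    obtain ⟨β, hβ1, hβ2⟩ := exists_between (show max c 0 < α from max_lt hc hα.1)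
    have hβ : β ∈ Set.Ioo (0:ℝ) α := ⟨lt_of_le_of_lt (le_max_right c 0) hβ1, hβ2⟩
    have h1 : qf μ β < d := lt_of_le_of_lt (h β hβ) hd
    obtain ⟨e, he1, he2⟩ :=
      exists_lt_of_csInf_lt (qf_set_nonempty μ (hβ.2.trans hα.2)) h1
    calc c ≤ max c 0 := le_max_left _ _
      _ < β := hβ1
      _ ≤ (μ (Set.Iic e)).toReal := he1
      _ ≤ (μ (Set.Iic d)).toReal := F_mono μ he2.le
  linarith

end aux

section main

open Set Filter Topology

lemma VaR_eq_of_monotone {Ω : Type*} [MeasurableSpace Ω] (P : Measure Ω)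
    [IsProbabilityMeasure P] (U : Ω → ℝ) (hU : Measurable U)
    (hUunif : P.map U = volume.restrict (Set.Ioo (0 : ℝ) 1))
    (g : ℝ → ℝ)
    (hmono : ∀ ⦃u v : ℝ⦄, u ∈ Set.Ioo (0:ℝ) 1 → v ∈ Set.Ioo (0:ℝ) 1 → u ≤ v → g u ≤ g v)
    (hlc : ∀ α ∈ Set.Ioo (0:ℝ) 1, ∀ a < g α, ∃ β ∈ Set.Ioo (0:ℝ) α, a < g β)
    {α : ℝ} (hα : α ∈ Set.Ioo (0:ℝ) 1) :
    VaR P (fun ω => g (U ω)) α = g α := by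
  set T : ℝ → Set ℝ := fun a => {u | a < g u} ∩ Set.Ioo 0 1 with hT
  have hmeas : ∀ a, MeasurableSet (T a) := by
    intro a
    apply Set.OrdConnected.measurableSet
    constructor
    intro u hu v hv w hw
    have hwio : w ∈ Set.Ioo (0:ℝ) 1 := ⟨lt_of_lt_of_le hu.2.1 hw.1, lt_of_le_of_lt hw.2 hv.2.2⟩
    exact ⟨lt_of_lt_of_le hu.1 (hmono hu.2 hwio hw.1), hwio⟩
  have hnull : P (U ⁻¹' Set.Ioo (0:ℝ) 1)ᶜ = 0 := by
    have h1 : P (U ⁻¹' Set.Ioo (0:ℝ) 1) = 1 := by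
      rw [← Measure.map_apply hU measurableSet_Ioo, hUunif,
        Measure.restrict_apply measurableSet_Ioo]
      simp [Real.volume_Ioo]
    rw [measure_compl (hU measurableSet_Ioo) (measure_ne_top _ _), h1, measure_univ]
    simp
  have key : ∀ a, P {ω | a < g (U ω)} = volume (T a) := by
    intro a
    have h1 : P {ω | a < g (U ω)} = P (U ⁻¹' T a) := by
      rw [hT]
      rw [Set.preimage_inter]
      exact (measure_inter_conull hnull).symm
    rw [h1, ← Measure.map_apply hU (hmeas a), hUunif,
      Measure.restrict_apply (hmeas a)]
    congr 1
    rw [hT]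
    ext u
    simp only [Set.mem_inter_iff, Set.mem_setOf_eq]
    tauto
  have hmem : (P {ω | g α < g (U ω)}).toReal ≤ 1 - α := by
    rw [key]
    have hsub : T (g α) ⊆ Set.Ioo α 1 := by
      intro u hu
      refine ⟨?_, hu.2.2⟩
      by_contra hle
      push_neg at hle
      exact absurd (hmono hu.2 hα hle) (not_le.2 hu.1)
    calc (volume (T (g α))).toReal ≤ (volume (Set.Ioo α 1)).toReal :=
          ENNReal.toReal_mono (by simp [Real.volume_Ioo]) (measure_mono hsub)
      _ = 1 - α := by rw [Real.volume_Ioo, ENNReal.toReal_ofReal (by linarith [hα.2])]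
  have hlb : ∀ a, (P {ω | a < g (U ω)}).toReal ≤ 1 - α → g α ≤ a := by
    intro a ha
    by_contra hlt
    push_neg at hlt
    obtain ⟨β, hβ, hgβ⟩ := hlc α hα a hlt
    have hsub : Set.Ico β 1 ⊆ T a := by
      intro u hu
      have huio : u ∈ Set.Ioo (0:ℝ) 1 := ⟨lt_of_lt_of_le hβ.1 hu.1, hu.2⟩
      exact ⟨lt_of_lt_of_le hgβ (hmono ⟨hβ.1, hβ.2.trans hα.2⟩ huio hu.1), huio⟩
    have hfin : volume (T a) ≠ ⊤ := by
      refine ne_top_of_le_ne_top ?_ (measure_mono Set.inter_subset_right)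
      simp [Real.volume_Ioo]
    have h2 : 1 - β ≤ (volume (T a)).toReal := by
      calc 1 - β = (volume (Set.Ico β 1)).toReal := by
            rw [Real.volume_Ico, ENNReal.toReal_ofReal (by linarith [hβ.2, hα.2])]
        _ ≤ (volume (T a)).toReal := ENNReal.toReal_mono hfin (measure_mono hsub)
    rw [key] at ha
    linarith [hβ.2]
  refine le_antisymm (csInf_le ⟨g α, fun a ha => hlb a ha⟩ hmem)
    (le_csInf ⟨g α, hmem⟩ fun a ha => hlb a ha)

end main

/-- For the comonotone vector `Y = (F⁻¹_{μ₁}(U),…,F⁻¹_{μₙ}(U))` and a nondecreasing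
left-continuous aggregation function `f`, `VaR^α(f(Y)) = q(α) := f(F⁻¹_{μ₁}(α),…,F⁻¹_{μₙ}(α))`
for every `α ∈ (0,1)`. -/
theorem VaR_comonotone {Ω : Type*} [MeasurableSpace Ω] (P : Measure Ω)
    [IsProbabilityMeasure P]
    (n : ℕ) (U : Ω → ℝ) (hU : Measurable U)
    (hUunif : P.map U = volume.restrict (Set.Ioo (0 : ℝ) 1))
    (μ : Fin n → ProbabilityMeasure ℝ)
    (f : (Fin n → ℝ) → ℝ) (hf : Monotone f)
    (hlc : ∀ x : Fin n → ℝ,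
      Filter.Tendsto f (nhdsWithin x {y | ∀ i, y i < x i}) (nhds (f x))) :
    ∀ α ∈ Set.Ioo (0 : ℝ) 1,
      VaR P (fun ω => f (fun i => qf (μ i).toMeasure (U ω))) α
        = f (fun i => qf (μ i).toMeasure α) := by
  intro α hα
  set g : ℝ → ℝ := fun u => f (fun i => qf (μ i).toMeasure u) with hg
  have hmono : ∀ ⦃u v : ℝ⦄, u ∈ Set.Ioo (0:ℝ) 1 → v ∈ Set.Ioo (0:ℝ) 1 → u ≤ v → g u ≤ g v := by
    intro u v hu hv huv
    exact hf fun i => qf_mono _ hu.1 hv.2 huv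
  have hB : ∀ α' ∈ Set.Ioo (0:ℝ) 1, ∀ a < g α', ∃ β ∈ Set.Ioo (0:ℝ) α', a < g β := by
    intro α' hα' a ha
    set x : Fin n → ℝ := fun i => qf (μ i).toMeasure α' with hx
    have h1 : ∀ᶠ y in nhdsWithin x {y | ∀ i, y i < x i}, a < f y :=
      (hlc x).eventually (eventually_gt_nhds ha)
    have h2 : Filter.Tendsto (fun ε : ℝ => fun i => x i - ε) (nhdsWithin 0 (Set.Ioi 0))
        (nhdsWithin x {y | ∀ i, y i < x i}) := by
      rw [tendsto_nhdsWithin_iff]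
      constructor
      · refine Filter.Tendsto.mono_left ?_ nhdsWithin_le_nhds
        rw [tendsto_pi_nhds]
        intro i
        simpa [Pi.sub_def, hx] using (continuous_const.sub continuous_id).tendsto (0 : ℝ)
      · filter_upwards [self_mem_nhdsWithin] with ε hε i
        exact sub_lt_self (x i) hε
    have h3 := h2.eventually h1
    obtain ⟨ε, hε2, hε1⟩ := (h3.and self_mem_nhdsWithin).exists
    have h4 : ∀ i, ∀ᶠ β in nhdsWithin α' (Set.Iio α'), x i - ε < qf (μ i).toMeasure β := by
      intro i
      obtain ⟨β₀, hβ₀, hq⟩ := qf_leftLim (μ i).toMeasure hα' hε1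
      filter_upwards [Ioo_mem_nhdsLT hβ₀.2] with β hβ
      exact lt_of_lt_of_le hq (qf_mono _ hβ₀.1 (hβ.2.trans hα'.2) hβ.1.le)
    have h5 : ∀ᶠ β in nhdsWithin α' (Set.Iio α'), ∀ i, x i - ε < qf (μ i).toMeasure β :=
      Filter.eventually_all.2 h4
    have h6 : ∀ᶠ β in nhdsWithin α' (Set.Iio α'), β ∈ Set.Ioo (0:ℝ) α' :=
      Ioo_mem_nhdsLT hα'.1
    obtain ⟨β, hβ1, hβ2⟩ := (h6.and h5).exists
    exact ⟨β, hβ1, lt_of_lt_of_le hε2 (hf fun i => (hβ2 i).le)⟩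
  exact VaR_eq_of_monotone P U hU hUunif g hmono hB hα
end
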